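/- The set of maximal cofinite isomorphisms of X_rW_n is a group under the operation sending (φ₁, φ₂) to the unique maximal extension of the cofinite isomorphism u ↦ φ₂(φ₁(u)) defined on φ₁⁻¹(range(φ₁) ∩ dom(φ₂)); the identity element is the identity map of X_rW_n, and the inverse of φ is the unique maximal extension of the set-theoretic inverse of φ. -/

import Mathlib

/-- A point `x_i α` of `X_r W_n`: the letter `x_i` together with a word `α` over `{1,…,n}`. -/
abbrev HTPt (n r : ℕ) := Fin r × List (Fin n)

/-- The right action of the free monoid `W_n` on `X_r W_n`: `(x_i α) · w = x_i (α w)`. -/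
def HTact {n r : ℕ} (u : HTPt n r) (w : List (Fin n)) : HTPt n r := (u.1, u.2 ++ w)

/-- A subspace of `X_r W_n`: a nonempty subset closed under the right `W_n`-action. -/
def IsSubspace {n r : ℕ} (V : Set (HTPt n r)) : Prop :=
  V.Nonempty ∧ ∀ u ∈ V, ∀ w : List (Fin n), HTact u w ∈ V

/-- A cofinite subset of `X_r W_n`. -/
def IsCofinite {n r : ℕ} (V : Set (HTPt n r)) : Prop := Set.Finite Vᶜ

/-- A cofinite isomorphism of `X_r W_n`: a bijective homomorphism (partial map commuting with
the right `W_n`-action) between cofinite subspaces. -/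
def IsCofIso {n r : ℕ} (θ : HTPt n r →. HTPt n r) : Prop :=
  IsSubspace θ.Dom ∧ IsCofinite θ.Dom ∧ IsSubspace θ.ran ∧ IsCofinite θ.ran ∧
    (∀ u v, v ∈ θ u → ∀ w : List (Fin n), HTact v w ∈ θ (HTact u w)) ∧
    (∀ u₁ u₂ v, v ∈ θ u₁ → v ∈ θ u₂ → u₁ = u₂)

/-- `θ'` extends `θ`: `θ' u = θ u` whenever `θ u` is defined. -/
def HTExtends {n r : ℕ} (θ' θ : HTPt n r →. HTPt n r) : Prop :=
  ∀ u v, v ∈ θ u → v ∈ θ' u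

/-- A maximal cofinite isomorphism: its only extension is itself. -/
def IsMaxCofIso {n r : ℕ} (θ : HTPt n r →. HTPt n r) : Prop :=
  IsCofIso θ ∧ ∀ θ', IsCofIso θ' → HTExtends θ' θ → θ' = θ

/-- The underlying set of the Higman–Thompson group `G_{n,r}`: the maximal cofinite
isomorphisms of `X_r W_n`. -/
abbrev HT (n r : ℕ) := {θ : HTPt n r →. HTPt n r // IsMaxCofIso θ}

/-- `mul` is the Higman–Thompson multiplication: `mul φ₁ φ₂` is the (unique) maximal
extension of the composite `u ↦ φ₂ (φ₁ u)`. -/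
def IsHTMul (n r : ℕ) (mul : HT n r → HT n r → HT n r) : Prop :=
  ∀ φ₁ φ₂ : HT n r, HTExtends (mul φ₁ φ₂).val (PFun.comp φ₂.val φ₁.val)

namespace HTAux

variable {n r : ℕ}

lemma htact_act (u : HTPt n r) (w w' : List (Fin n)) :
    HTact (HTact u w) w' = HTact u (w ++ w') := by simp [HTact]

lemma htact_nil (u : HTPt n r) : HTact u [] = u := by simp [HTact]

lemma htact_right_inj {v₁ v₂ : HTPt n r} {w : List (Fin n)}
    (h : HTact v₁ w = HTact v₂ w) : v₁ = v₂ := by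
  rcases v₁ with ⟨i, a⟩; rcases v₂ with ⟨j, b⟩
  simp only [HTact, Prod.mk.injEq] at h
  exact Prod.ext h.1 (List.append_cancel_right h.2)

lemma htact_left_injOn (u : HTPt n r) : Function.Injective (HTact u) := by
  intro w₁ w₂ h
  simp only [HTact, Prod.mk.injEq] at h
  exact List.append_cancel_left h.2

lemma finite_bad {F : Set (HTPt n r)} (hF : F.Finite) (u : HTPt n r) :
    {w : List (Fin n) | HTact u w ∈ F}.Finite := by
  apply Set.Finite.of_finite_image (f := HTact u)
  · exact hF.subset (by rintro _ ⟨w, hw, rfl⟩; exact hw)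
  · exact (htact_left_injOn u).injOn

section Inhab
variable [Nonempty (Fin n)]

lemma exists_act2 {F : Set (HTPt n r)} (hF : F.Finite) (u₁ u₂ : HTPt n r) :
    ∃ w, HTact u₁ w ∉ F ∧ HTact u₂ w ∉ F := by
  have h := ((finite_bad hF u₁).union (finite_bad hF u₂)).infinite_compl
  obtain ⟨w, hw⟩ := h.nonempty
  simp only [Set.mem_compl_iff, Set.mem_union, Set.mem_setOf_eq, not_or] at hw
  exact ⟨w, hw⟩

lemma exists_act_mem {S : Set (HTPt n r)} (hS : IsCofinite S) (u : HTPt n r) :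
    ∃ w, HTact u w ∈ S := by
  obtain ⟨w, hw, -⟩ := exists_act2 hS u u
  exact ⟨w, by simpa using hw⟩

end Inhab

/-- The defining property of the maximal extension. -/
def MEP (θ : HTPt n r →. HTPt n r) (u v : HTPt n r) : Prop :=
  (∀ w x, x ∈ θ (HTact u w) → x = HTact v w) ∧ ∃ w, HTact u w ∈ θ.Dom

lemma MEP_unique {θ : HTPt n r →. HTPt n r} {u v₁ v₂ : HTPt n r}
    (h₁ : MEP θ u v₁) (h₂ : MEP θ u v₂) : v₁ = v₂ := by
  obtain ⟨w, hw⟩ := h₁.2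
  obtain ⟨x, hx⟩ := Part.dom_iff_mem.1 hw
  exact htact_right_inj ((h₁.1 w x hx).symm.trans (h₂.1 w x hx))

/-- The maximal extension of a cofinite isomorphism. -/
noncomputable def maxExt (θ : HTPt n r →. HTPt n r) : HTPt n r →. HTPt n r :=
  fun u => ⟨∃ v, MEP θ u v, fun h => h.choose⟩

lemma mem_maxExt {θ : HTPt n r →. HTPt n r} {u v : HTPt n r} :
    v ∈ maxExt θ u ↔ MEP θ u v := by
  constructor
  · rintro ⟨h, rfl⟩; exact h.choose_spec
  · intro h; exact ⟨⟨v, h⟩, MEP_unique (Exists.choose_spec ⟨v, h⟩) h⟩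

lemma extends_maxExt {θ : HTPt n r →. HTPt n r} (hθ : IsCofIso θ) :
    HTExtends (maxExt θ) θ := by
  intro u v hv
  refine mem_maxExt.2 ⟨fun w x hx => Part.mem_unique hx (hθ.2.2.2.2.1 u v hv w), ⟨[], ?_⟩⟩
  rw [htact_nil]
  exact Part.dom_iff_mem.2 ⟨v, hv⟩

lemma maxExt_equivariant [Nonempty (Fin n)] {θ : HTPt n r →. HTPt n r}
    (hd : IsCofinite θ.Dom) {u v : HTPt n r}
    (h : v ∈ maxExt θ u) (w : List (Fin n)) :
    HTact v w ∈ maxExt θ (HTact u w) := by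
  rw [mem_maxExt] at h ⊢
  obtain ⟨h1, -⟩ := h
  constructor
  · intro w' x hx
    rw [htact_act] at hx
    rw [htact_act]
    exact h1 (w ++ w') x hx
  · exact exists_act_mem hd _

lemma cofIso_sub_maxExt [Nonempty (Fin n)] {θ θ' : HTPt n r →. HTPt n r}
    (hθ : IsCofIso θ) (hθ' : IsCofIso θ') (h : HTExtends θ' θ) :
    HTExtends (maxExt θ) θ' := by
  intro u v hv
  refine mem_maxExt.2 ⟨fun w x hx => Part.mem_unique (h _ _ hx) (hθ'.2.2.2.2.1 u v hv w), ?_⟩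
  exact exists_act_mem hθ.2.1 u

end HTAux

namespace HTAux
variable {n r : ℕ} [Nonempty (Fin n)] [Nonempty (Fin r)]

lemma htpt_infinite : Infinite (HTPt n r) := by
  have : Infinite (List (Fin n)) := inferInstance
  infer_instance

lemma cofinite_nonempty {S : Set (HTPt n r)} (hS : IsCofinite S) : S.Nonempty := by
  have := htpt_infinite (n := n) (r := r)
  have h := hS.infinite_compl
  rw [compl_compl] at h
  exact h.nonempty

lemma maxExt_isCofIso {θ : HTPt n r →. HTPt n r} (hθ : IsCofIso θ) :
    IsCofIso (maxExt θ) := by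
  obtain ⟨⟨hdne, hdcl⟩, hdcof, ⟨hrne, hrcl⟩, hrcof, hequi, hinj⟩ := hθ
  have hsub : θ.Dom ⊆ (maxExt θ).Dom := by
    intro u hu
    obtain ⟨v, hv⟩ := Part.dom_iff_mem.1 hu
    exact Part.dom_iff_mem.2 ⟨v, extends_maxExt ⟨⟨hdne, hdcl⟩, hdcof, ⟨hrne, hrcl⟩, hrcof, hequi, hinj⟩ u v hv⟩
  have hransub : θ.ran ⊆ (maxExt θ).ran := by
    rintro v ⟨u, hu⟩
    exact ⟨u, extends_maxExt ⟨⟨hdne, hdcl⟩, hdcof, ⟨hrne, hrcl⟩, hrcof, hequi, hinj⟩ u v hu⟩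
  refine ⟨⟨hdne.mono hsub, ?_⟩, Set.Finite.subset hdcof (Set.compl_subset_compl.2 hsub),
    ⟨hrne.mono hransub, ?_⟩, Set.Finite.subset hrcof (Set.compl_subset_compl.2 hransub),
    fun u v hv w => maxExt_equivariant hdcof hv w, ?_⟩
  · intro u hu w
    obtain ⟨v, hv⟩ := Part.dom_iff_mem.1 hu
    exact Part.dom_iff_mem.2 ⟨HTact v w, maxExt_equivariant hdcof hv w⟩
  · rintro v ⟨u, hu⟩ w
    exact ⟨HTact u w, maxExt_equivariant hdcof hu w⟩
  · intro u₁ u₂ v h₁ h₂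
    rw [mem_maxExt] at h₁ h₂
    obtain ⟨w, hw₁, hw₂⟩ := exists_act2 hdcof u₁ u₂
    rw [Set.mem_compl_iff, not_not] at hw₁ hw₂
    obtain ⟨x₁, hx₁⟩ := Part.dom_iff_mem.1 hw₁
    obtain ⟨x₂, hx₂⟩ := Part.dom_iff_mem.1 hw₂
    have e1 := h₁.1 w x₁ hx₁
    have e2 := h₂.1 w x₂ hx₂
    have : x₁ = x₂ := e1.trans e2.symm
    subst this
    exact htact_right_inj (hinj _ _ _ hx₁ hx₂)

lemma ext_of_extends {θ θ' : HTPt n r →. HTPt n r}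
    (h₁ : HTExtends θ' θ) (h₂ : HTExtends θ θ') : θ' = θ := by
  funext u
  exact Part.ext fun v => ⟨fun hv => h₂ u v hv, fun hv => h₁ u v hv⟩

lemma maxExt_isMax {θ : HTPt n r →. HTPt n r} (hθ : IsCofIso θ) :
    IsMaxCofIso (maxExt θ) := by
  refine ⟨maxExt_isCofIso hθ, fun θ' hθ' hext => ?_⟩
  have h2 : HTExtends θ' θ := fun u v hv => hext u v (extends_maxExt hθ u v hv)
  exact ext_of_extends hext (cofIso_sub_maxExt hθ hθ' h2)

lemma eq_maxExt_of_max {θ φ : HTPt n r →. HTPt n r} (hθ : IsCofIso θ)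
    (hφ : IsMaxCofIso φ) (h : HTExtends φ θ) : φ = maxExt θ :=
  (hφ.2 (maxExt θ) (maxExt_isCofIso hθ) (cofIso_sub_maxExt hθ hφ.1 h)).symm

lemma max_unique {θ φ₁ φ₂ : HTPt n r →. HTPt n r} (hθ : IsCofIso θ)
    (h₁ : IsMaxCofIso φ₁) (h₂ : IsMaxCofIso φ₂)
    (e₁ : HTExtends φ₁ θ) (e₂ : HTExtends φ₂ θ) : φ₁ = φ₂ :=
  (eq_maxExt_of_max hθ h₁ e₁).trans (eq_maxExt_of_max hθ h₂ e₂).symm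

end HTAux

namespace HTAux
set_option linter.unusedSectionVars false
variable {n r : ℕ} [Nonempty (Fin n)] [Nonempty (Fin r)]

lemma mem_comp {θ₁ θ₂ : HTPt n r →. HTPt n r} {u x : HTPt n r} :
    x ∈ (θ₂.comp θ₁) u ↔ ∃ v, v ∈ θ₁ u ∧ x ∈ θ₂ v := by
  simp [PFun.comp_apply, Part.mem_bind_iff]
  exact Part.mem_bind_iff.trans
    ⟨fun ⟨v, h1, h2⟩ => ⟨v.1, v.2, h1, h2⟩, fun ⟨a, b, h1, h2⟩ => ⟨(a, b), h1, h2⟩⟩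

/-- preimage of finite set under injective pfun is finite -/
lemma pfun_preimage_finite {θ : HTPt n r →. HTPt n r}
    (hinj : ∀ u₁ u₂ v, v ∈ θ u₁ → v ∈ θ u₂ → u₁ = u₂)
    {S : Set (HTPt n r)} (hS : S.Finite) :
    {u | ∃ v ∈ θ u, v ∈ S}.Finite := by
  classical
  set T := {u | ∃ v ∈ θ u, v ∈ S}
  set g : HTPt n r → HTPt n r := fun u =>
    if h : (θ u).Dom then (θ u).get h else u
  apply Set.Finite.of_finite_image (f := g)
  · apply hS.subset
    rintro _ ⟨u, ⟨v, hv, hvS⟩, rfl⟩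
    have hd : (θ u).Dom := Part.dom_iff_mem.2 ⟨v, hv⟩
    have : g u = v := by
      simp only [g, dif_pos hd]
      exact Part.mem_unique ⟨hd, rfl⟩ hv
    rwa [this]
  · rintro u₁ ⟨v₁, hv₁, -⟩ u₂ ⟨v₂, hv₂, -⟩ hg
    have hd₁ : (θ u₁).Dom := Part.dom_iff_mem.2 ⟨v₁, hv₁⟩
    have hd₂ : (θ u₂).Dom := Part.dom_iff_mem.2 ⟨v₂, hv₂⟩
    simp only [g, dif_pos hd₁, dif_pos hd₂] at hg
    exact hinj u₁ u₂ _ ⟨hd₁, rfl⟩ (hg ▸ ⟨hd₂, rfl⟩)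

lemma pfun_image_finite {θ : HTPt n r →. HTPt n r}
    {S : Set (HTPt n r)} (hS : S.Finite) :
    {x | ∃ u ∈ S, x ∈ θ u}.Finite := by
  classical
  set g : HTPt n r → HTPt n r := fun u =>
    if h : (θ u).Dom then (θ u).get h else u
  apply Set.Finite.subset (hS.image g)
  rintro x ⟨u, hu, hx⟩
  have hd : (θ u).Dom := Part.dom_iff_mem.2 ⟨x, hx⟩
  refine ⟨u, hu, ?_⟩
  simp only [g, dif_pos hd]
  exact Part.mem_unique ⟨hd, rfl⟩ hx

lemma comp_isCofIso {θ₁ θ₂ : HTPt n r →. HTPt n r}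
    (h₁ : IsCofIso θ₁) (h₂ : IsCofIso θ₂) : IsCofIso (θ₂.comp θ₁) := by
  obtain ⟨⟨hd₁ne, hd₁cl⟩, hd₁cof, ⟨hr₁ne, hr₁cl⟩, hr₁cof, he₁, hi₁⟩ := h₁
  obtain ⟨⟨hd₂ne, hd₂cl⟩, hd₂cof, ⟨hr₂ne, hr₂cl⟩, hr₂cof, he₂, hi₂⟩ := h₂
  have hequi : ∀ u x, x ∈ (θ₂.comp θ₁) u → ∀ w, HTact x w ∈ (θ₂.comp θ₁) (HTact u w) := by
    intro u x hx w
    obtain ⟨v, hv, hvx⟩ := mem_comp.1 hx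
    exact mem_comp.2 ⟨HTact v w, he₁ u v hv w, he₂ v x hvx w⟩
  -- domain nonempty
  have hInf := htpt_infinite (n := n) (r := r)
  have hdne' : (θ₂.comp θ₁).Dom.Nonempty := by
    have hcof : IsCofinite (θ₁.ran ∩ θ₂.Dom) := by
      have := hr₁cof.union hd₂cof
      simpa [IsCofinite, Set.compl_inter] using this
    obtain ⟨v, hv₁, hv₂⟩ := cofinite_nonempty hcof
    obtain ⟨u, hu⟩ := hv₁
    obtain ⟨x, hx⟩ := Part.dom_iff_mem.1 hv₂
    exact ⟨u, Part.dom_iff_mem.2 ⟨x, mem_comp.2 ⟨v, hu, hx⟩⟩⟩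
  have hdcof : IsCofinite (θ₂.comp θ₁).Dom := by
    apply Set.Finite.subset (hd₁cof.union (pfun_preimage_finite hi₁ hd₂cof))
    intro u hu
    by_cases hd : u ∈ θ₁.Dom
    · obtain ⟨v, hv⟩ := Part.dom_iff_mem.1 hd
      right
      refine ⟨v, hv, ?_⟩
      intro hvd
      obtain ⟨x, hx⟩ := Part.dom_iff_mem.1 hvd
      exact hu (Part.dom_iff_mem.2 ⟨x, mem_comp.2 ⟨v, hv, hx⟩⟩)
    · exact Or.inl hd
  have hrcof : IsCofinite (θ₂.comp θ₁).ran := by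
    apply Set.Finite.subset (hr₂cof.union (pfun_image_finite (θ := θ₂) hr₁cof))
    intro x hx
    by_cases hxr : x ∈ θ₂.ran
    · obtain ⟨v, hv⟩ := hxr
      right
      refine ⟨v, ?_, hv⟩
      intro hvr
      obtain ⟨u, hu⟩ := hvr
      exact hx ⟨u, mem_comp.2 ⟨v, hu, hv⟩⟩
    · exact Or.inl hxr
  refine ⟨⟨hdne', ?_⟩, hdcof, ⟨?_, ?_⟩, hrcof, hequi, ?_⟩
  · intro u hu w
    obtain ⟨x, hx⟩ := Part.dom_iff_mem.1 hu
    exact Part.dom_iff_mem.2 ⟨HTact x w, hequi u x hx w⟩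
  · obtain ⟨u, hu⟩ := hdne'
    obtain ⟨x, hx⟩ := Part.dom_iff_mem.1 hu
    exact ⟨x, u, hx⟩
  · rintro x ⟨u, hu⟩ w
    exact ⟨HTact u w, hequi u x hu w⟩
  · intro u₁ u₂ x hx₁ hx₂
    obtain ⟨v₁, hv₁, hx₁'⟩ := mem_comp.1 hx₁
    obtain ⟨v₂, hv₂, hx₂'⟩ := mem_comp.1 hx₂
    have := hi₂ v₁ v₂ x hx₁' hx₂'
    subst this
    exact hi₁ u₁ u₂ v₁ hv₁ hv₂

/-- set-theoretic inverse of a pfun -/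
noncomputable def pinv (θ : HTPt n r →. HTPt n r) : HTPt n r →. HTPt n r :=
  fun v => ⟨∃ u, v ∈ θ u, fun h => h.choose⟩

lemma mem_pinv {θ : HTPt n r →. HTPt n r}
    (hinj : ∀ u₁ u₂ v, v ∈ θ u₁ → v ∈ θ u₂ → u₁ = u₂) {u v : HTPt n r} :
    u ∈ pinv θ v ↔ v ∈ θ u := by
  constructor
  · rintro ⟨h, rfl⟩
    exact h.choose_spec
  · intro h
    have hd : ∃ u', v ∈ θ u' := ⟨u, h⟩
    exact ⟨hd, hinj _ _ _ hd.choose_spec h⟩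

lemma pinv_isCofIso {θ : HTPt n r →. HTPt n r} (hθ : IsCofIso θ) :
    IsCofIso (pinv θ) := by
  obtain ⟨⟨hdne, hdcl⟩, hdcof, ⟨hrne, hrcl⟩, hrcof, he, hi⟩ := hθ
  have hdom : (pinv θ).Dom = θ.ran := rfl
  have hran : (pinv θ).ran = θ.Dom := by
    ext u
    constructor
    · rintro ⟨v, hv⟩
      exact Part.dom_iff_mem.2 ⟨v, (mem_pinv hi).1 hv⟩
    · intro hu
      obtain ⟨v, hv⟩ := Part.dom_iff_mem.1 hu
      exact ⟨v, (mem_pinv hi).2 hv⟩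
  rw [IsCofIso, hdom, hran]
  refine ⟨⟨hrne, hrcl⟩, hrcof, ⟨hdne, hdcl⟩, hdcof, ?_, ?_⟩
  · intro v u hu w
    exact (mem_pinv hi).2 (he u v ((mem_pinv hi).1 hu) w)
  · intro v₁ v₂ u h₁ h₂
    exact Part.mem_unique ((mem_pinv hi).1 h₁) ((mem_pinv hi).1 h₂)

lemma id_isMaxCofIso : IsMaxCofIso (PFun.lift (id : HTPt n r → HTPt n r)) := by
  have hmem : ∀ u v : HTPt n r, v ∈ PFun.lift (id : HTPt n r → HTPt n r) u ↔ v = u := by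
    intro u v; simp [PFun.lift, Part.mem_some_iff, eq_comm]
  constructor
  · refine ⟨⟨⟨Classical.arbitrary _, trivial⟩, fun _ _ _ => trivial⟩, ?_, ⟨⟨Classical.arbitrary _, ?_⟩, ?_⟩, ?_, ?_, ?_⟩
    · simp [IsCofinite, PFun.Dom, PFun.lift]
    · exact ⟨_, (hmem _ _).2 rfl⟩
    · rintro v ⟨u, hu⟩ w
      exact ⟨HTact v w, (hmem _ _).2 rfl⟩
    · have : (PFun.lift (id : HTPt n r → HTPt n r)).ran = Set.univ := by
        ext v; simp only [Set.mem_univ, iff_true]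
        exact ⟨v, (hmem _ _).2 rfl⟩
      rw [IsCofinite, this]
      simp
    · intro u v hv w
      rw [hmem] at hv
      subst hv
      exact (hmem _ _).2 rfl
    · intro u₁ u₂ v h₁ h₂
      rw [hmem] at h₁ h₂
      exact h₁.symm.trans h₂
  · intro θ' hθ' hext
    funext u
    refine Part.ext fun v => ⟨fun hv => ?_, fun hv => ?_⟩
    · have hu : u ∈ θ' u := hext u u ((hmem _ _).2 rfl)
      rw [hmem]
      exact Part.mem_unique hv hu
    · rw [hmem] at hv
      rw [hv]
      exact hext u u ((hmem _ _).2 rfl)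

end HTAux

namespace HTAux
set_option linter.unusedSectionVars false
variable {n r : ℕ} [Nonempty (Fin n)] [Nonempty (Fin r)]

lemma extends_trans {a b c : HTPt n r →. HTPt n r}
    (h₁ : HTExtends a b) (h₂ : HTExtends b c) : HTExtends a c :=
  fun u v hv => h₁ u v (h₂ u v hv)

lemma comp_extends {f f' g g' : HTPt n r →. HTPt n r}
    (hf : HTExtends f' f) (hg : HTExtends g' g) :
    HTExtends (f'.comp g') (f.comp g) := by
  intro u x hx
  obtain ⟨v, hv, hvx⟩ := mem_comp.1 hx
  exact mem_comp.2 ⟨v, hg u v hv, hf v x hvx⟩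

lemma mem_lift_id {u v : HTPt n r} : v ∈ PFun.lift (id : HTPt n r → HTPt n r) u ↔ v = u := by
  simp [PFun.lift, Part.mem_some_iff, eq_comm]

noncomputable def htMul (a b : HT n r) : HT n r :=
  ⟨maxExt (b.val.comp a.val), maxExt_isMax (comp_isCofIso a.2.1 b.2.1)⟩

noncomputable def htInv (a : HT n r) : HT n r :=
  ⟨maxExt (pinv a.val), maxExt_isMax (pinv_isCofIso a.2.1)⟩

noncomputable def htOne : HT n r := ⟨PFun.lift id, id_isMaxCofIso⟩

lemma comp_lift_id (a : HTPt n r →. HTPt n r) : a.comp (PFun.lift id) = a := by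
  funext u
  exact Part.ext fun v => by
    rw [PFun.comp_apply]
    simp [PFun.lift]
    exact Part.mem_bind_iff.trans ⟨fun ⟨w, hw, h⟩ => by rw [Part.mem_some_iff.mp hw] at h; exact h,
      fun h => ⟨u, Part.mem_some u, h⟩⟩

lemma lift_id_comp (a : HTPt n r →. HTPt n r) : (PFun.lift id).comp a = a := by
  funext u
  exact Part.ext fun v => by
    constructor
    · intro h
      obtain ⟨x, hx, hxv⟩ := mem_comp.1 h
      rwa [mem_lift_id.1 hxv]
    · intro h
      exact mem_comp.2 ⟨v, h, mem_lift_id.2 rfl⟩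

lemma maxExt_self {a : HTPt n r →. HTPt n r} (ha : IsMaxCofIso a) : maxExt a = a :=
  (eq_maxExt_of_max ha.1 ha (fun _ _ h => h)).symm

end HTAux


open HTAux in
/-- The set of maximal cofinite isomorphisms of `X_r W_n` is a group under the operation
sending `(φ₁, φ₂)` to the unique maximal extension of `u ↦ φ₂ (φ₁ u)`; the identity element is
the identity map of `X_r W_n`, and the inverse of `φ` is the unique maximal extension of the
set-theoretic inverse of `φ`. -/
theorem maxCofIso_group (n r : ℕ) (hn : 2 ≤ n) (hr : 1 ≤ r) :
    ∃ (mul : HT n r → HT n r → HT n r) (one : HT n r) (inv : HT n r → HT n r),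
      (∀ a b c, mul (mul a b) c = mul a (mul b c)) ∧
      (∀ a, mul one a = a) ∧ (∀ a, mul a one = a) ∧
      (∀ a, mul (inv a) a = one) ∧ (∀ a, mul a (inv a) = one) ∧
      IsHTMul n r mul ∧
      one.val = PFun.lift id ∧
      (∀ φ : HT n r, ∀ u v, v ∈ φ.val u → u ∈ (inv φ).val v) := by
  haveI : Nonempty (Fin n) := ⟨⟨0, by omega⟩⟩
  haveI : Nonempty (Fin r) := ⟨⟨0, by omega⟩⟩
  refine ⟨htMul, htOne, htInv, ?_, ?_, ?_, ?_, ?_, ?_, rfl, ?_⟩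
  · -- associativity
    intro a b c
    apply Subtype.ext
    have hψ : IsCofIso (c.val.comp (b.val.comp a.val)) :=
      comp_isCofIso (comp_isCofIso a.2.1 b.2.1) c.2.1
    refine max_unique hψ (htMul (htMul a b) c).2 (htMul a (htMul b c)).2 ?_ ?_
    · exact extends_trans (extends_maxExt (comp_isCofIso (htMul a b).2.1 c.2.1))
        (comp_extends (fun _ _ h => h) (extends_maxExt (comp_isCofIso a.2.1 b.2.1)))
    · refine extends_trans (extends_maxExt (comp_isCofIso a.2.1 (htMul b c).2.1)) ?_
      refine extends_trans (comp_extends (extends_maxExt (comp_isCofIso b.2.1 c.2.1))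
        (fun _ _ h => h)) ?_
      intro u x hx
      obtain ⟨v, hv, hvx⟩ := mem_comp.1 hx
      obtain ⟨v', hv', hv'x⟩ := mem_comp.1 hv
      exact mem_comp.2 ⟨v', hv', mem_comp.2 ⟨v, hv'x, hvx⟩⟩
  · intro a
    apply Subtype.ext
    show maxExt (a.val.comp (PFun.lift id)) = a.val
    rw [comp_lift_id, maxExt_self a.2]
  · intro a
    apply Subtype.ext
    show maxExt ((PFun.lift id).comp a.val) = a.val
    rw [lift_id_comp, maxExt_self a.2]
  · -- left inverse
    intro a
    apply Subtype.ext
    have hinj := a.2.1.2.2.2.2.2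
    have hψ : IsCofIso (a.val.comp (pinv a.val)) :=
      comp_isCofIso (pinv_isCofIso a.2.1) a.2.1
    refine max_unique hψ (htMul (htInv a) a).2 htOne.2 ?_ ?_
    · exact extends_trans (extends_maxExt (comp_isCofIso (htInv a).2.1 a.2.1))
        (comp_extends (fun _ _ h => h) (extends_maxExt (pinv_isCofIso a.2.1)))
    · intro u x hx
      obtain ⟨v, hv, hvx⟩ := mem_comp.1 hx
      have : u ∈ a.val v := (mem_pinv hinj).1 hv
      exact mem_lift_id.2 (Part.mem_unique hvx this)
  · -- right inverse
    intro a
    apply Subtype.ext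
    have hinj := a.2.1.2.2.2.2.2
    have hψ : IsCofIso ((pinv a.val).comp a.val) :=
      comp_isCofIso a.2.1 (pinv_isCofIso a.2.1)
    refine max_unique hψ (htMul a (htInv a)).2 htOne.2 ?_ ?_
    · exact extends_trans (extends_maxExt (comp_isCofIso a.2.1 (htInv a).2.1))
        (comp_extends (extends_maxExt (pinv_isCofIso a.2.1)) (fun _ _ h => h))
    · intro u x hx
      obtain ⟨v, hv, hvx⟩ := mem_comp.1 hx
      have : v ∈ a.val x := (mem_pinv hinj).1 hvx
      exact mem_lift_id.2 (hinj x u v this hv)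
  · intro φ₁ φ₂
    exact extends_maxExt (comp_isCofIso φ₁.2.1 φ₂.2.1)
  · intro φ u v hv
    exact extends_maxExt (pinv_isCofIso φ.2.1) v u ((mem_pinv φ.2.1.2.2.2.2.2).2 hv)
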